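/- Let t be a non-source node in a finite directed acyclic graph G with source s. The binary relation ≤ on minimum cuts between s and t, defined by CUT₁ ≤ CUT₂ iff CUT₁ separates CUT₂ from s, is a non-strict partial order (reflexive, antisymmetric, and transitive). -/

import Mathlib

open Finset

/-- Consecutive edges in the list match head-to-tail. -/
def EChain {V E : Type*} (tl hd : E → V) (p : List E) : Prop :=
  p.Chain' (fun d e => hd d = tl e)

/-- A (nonempty) directed path of edges starting at node `s`. -/
def PathFrom {V E : Type*} (tl hd : E → V) (s : V) (p : List E) : Prop :=
  p ≠ [] ∧ EChain tl hd p ∧ ∀ e ∈ p.head?, tl e = s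

/-- The directed graph is acyclic: no nonempty edge-chain returns to its start. -/
def Acyclic {V E : Type*} (tl hd : E → V) : Prop :=
  ∀ p : List E, p ≠ [] → EChain tl hd p →
    ∀ d ∈ p.head?, ∀ e ∈ p.getLast?, hd e ≠ tl d

/-- `B` separates the edge set `A` from `s`: every directed path from `s`
ending with an edge of `A` passes through an edge of `B` (i.e. `B` is a cut
between `s` and `A`). -/
def Separates {V E : Type*} (tl hd : E → V) (s : V) (A B : Finset E) : Prop :=
  ∀ p : List E, PathFrom tl hd s p → (∃ e ∈ p.getLast?, e ∈ A) → ∃ b ∈ B, b ∈ p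

/-- The minimum cut capacity between `s` and the edge set `A`. -/
noncomputable def mincut {V E : Type*} [Fintype E] (tl hd : E → V) (s : V)
    (A : Finset E) : ℕ :=
  sInf {n | ∃ B : Finset E, Separates tl hd s A B ∧ B.card = n}

/-- `B` is a minimum cut between `s` and the edge set `A`. -/
def IsMinCut {V E : Type*} [Fintype E] (tl hd : E → V) (s : V) (A B : Finset E) : Prop :=
  Separates tl hd s A B ∧ B.card = mincut tl hd s A

/-- An edge set is regular if its cardinality equals its minimum cut capacity from `s`. -/
def Regular {V E : Type*} [Fintype E] (tl hd : E → V) (s : V) (A : Finset E) : Prop :=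
  A.card = mincut tl hd s A

/-- `A ∼ A'`: the two edge sets have a common minimum cut from `s`. -/
def EquivSets {V E : Type*} [Fintype E] (tl hd : E → V) (s : V) (A A' : Finset E) : Prop :=
  ∃ C : Finset E, IsMinCut tl hd s A C ∧ IsMinCut tl hd s A' C

/-- `A₁ ≺ A₂`: `|A₁| < |A₂|` and some minimum cut between `s` and `A₂`
also separates `A₁` from `s`. -/
def Dominates {V E : Type*} [Fintype E] (tl hd : E → V) (s : V) (A₁ A₂ : Finset E) : Prop :=
  A₁.card < A₂.card ∧
    ∃ C : Finset E, IsMinCut tl hd s A₂ C ∧ Separates tl hd s A₁ C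

/-- A directed path of edges from node `s` to node `t`. -/
def NPathFromTo {V E : Type*} (tl hd : E → V) (s t : V) (p : List E) : Prop :=
  PathFrom tl hd s p ∧ ∀ e ∈ p.getLast?, hd e = t

/-- `B` is a cut between the nodes `s` and `t`. -/
def NSeparates {V E : Type*} (tl hd : E → V) (s t : V) (B : Finset E) : Prop :=
  ∀ p : List E, NPathFromTo tl hd s t p → ∃ b ∈ B, b ∈ p

/-- The minimum cut capacity between the nodes `s` and `t`. -/
noncomputable def nmincut {V E : Type*} [Fintype E] (tl hd : E → V) (s t : V) : ℕ :=
  sInf {n | ∃ B : Finset E, NSeparates tl hd s t B ∧ B.card = n}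

/-- `B` is a minimum cut between the nodes `s` and `t`. -/
def IsNodeMinCut {V E : Type*} [Fintype E] (tl hd : E → V) (s t : V) (B : Finset E) : Prop :=
  NSeparates tl hd s t B ∧ B.card = nmincut tl hd s t

/-- `d ≤ e` for edges: there is a directed path starting with `d` and ending with `e`
(in particular `d ≤ d`). -/
def EdgeLe {V E : Type*} (tl hd : E → V) (d e : E) : Prop :=
  ∃ p : List E, EChain tl hd p ∧ p.head? = some d ∧ p.getLast? = some e

/-- A family of pairwise edge-disjoint paths. -/
def EdgeDisjoint {E : Type*} {n : ℕ} (P : Fin n → List E) : Prop :=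
  ∀ i j, i ≠ j → List.Disjoint (P i) (P j)

/-- The primary minimum cut between nodes `s` and `t`: a minimum cut separating
every minimum cut between `s` and `t` from `s`. -/
def IsPrimaryNodeMinCut {V E : Type*} [Fintype E] (tl hd : E → V) (s t : V)
    (C : Finset E) : Prop :=
  IsNodeMinCut tl hd s t C ∧
    ∀ C' : Finset E, IsNodeMinCut tl hd s t C' → Separates tl hd s C' C

/-- The primary minimum cut between `s` and an edge set `A`. -/
def IsPrimaryMinCut {V E : Type*} [Fintype E] (tl hd : E → V) (s : V)
    (A C : Finset E) : Prop :=
  IsMinCut tl hd s A C ∧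
    ∀ C' : Finset E, IsMinCut tl hd s A C' → Separates tl hd s C' C

/-- The equivalence class (within the collection `𝒜`) of the wiretap set `A`
under the relation `∼`. -/
def ClassOf {V E : Type*} [Fintype E] (tl hd : E → V) (s : V)
    (𝒜 : Finset (Finset E)) (A : Finset E) : Set (Finset E) :=
  {A' | A' ∈ 𝒜 ∧ EquivSets tl hd s A A'}

/-- Domination amongst (distinct) equivalence classes: some common minimum cut of all
the sets in `C₂` separates every set in `C₁` from `s`. -/
def ClDominates {V E : Type*} [Fintype E] (tl hd : E → V) (s : V)
    (C₁ C₂ : Set (Finset E)) : Prop :=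
  C₁ ≠ C₂ ∧ ∃ CUT : Finset E,
    (∀ A ∈ C₂, IsMinCut tl hd s A CUT) ∧ (∀ A ∈ C₁, Separates tl hd s A CUT)


section Aux
variable {V E : Type*}

lemma myIndexOf_lt_of_mem_take [DecidableEq E] {p : List E} {e : E} {n : ℕ}
    (h : e ∈ p.take n) : p.idxOf e < n := by
  have hmem : e ∈ p := List.mem_of_mem_take h
  have h1 : (p.take n ++ p.drop n).idxOf e = (p.take n).idxOf e :=
    List.idxOf_append_of_mem h
  have h2 : (p.take n).idxOf e < (p.take n).length := List.idxOf_lt_length_iff.2 h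
  have h3 : (p.take n).length ≤ n := by simp [List.length_take]
  rw [List.take_append_drop] at h1
  omega

lemma head?_take {p : List E} {n : ℕ} (hn : 0 < n) : (p.take n).head? = p.head? := by
  cases p with
  | nil => simp
  | cons a l => cases n with
    | zero => omega
    | succ m => simp

lemma path_take [DecidableEq E] {tl hd : E → V} {s : V} {p : List E}
    (hp : PathFrom tl hd s p) {b : E} (hb : b ∈ p) :
    PathFrom tl hd s (p.take (p.idxOf b + 1)) ∧
      (p.take (p.idxOf b + 1)).getLast? = some b := by
  obtain ⟨hne, hchain, hhead⟩ := hp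
  have hlt : p.idxOf b < p.length := List.idxOf_lt_length_iff.2 hb
  have hlen : (p.take (p.idxOf b + 1)).length = p.idxOf b + 1 := by
    simp [List.length_take]; omega
  have hlast : (p.take (p.idxOf b + 1)).getLast? = some b := by
    rw [List.getLast?_eq_getElem?, hlen]
    simp only [Nat.add_sub_cancel]
    rw [List.getElem?_take]
    simp only [Nat.lt_succ_self, if_true]
    rw [List.getElem?_eq_getElem hlt]
    exact congrArg some (List.idxOf_get _)
  refine ⟨⟨?_, hchain.prefix (List.take_prefix _ _), ?_⟩, hlast⟩
  · intro h; rw [h] at hlen; simp at hlen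
  · rw [head?_take (Nat.succ_pos _)]; exact hhead

/-- Every edge of a minimum node cut lies on an s-t path meeting the cut only at that edge. -/
lemma mincut_edge_path [Fintype E] [DecidableEq E] {tl hd : E → V} {s t : V} {C : Finset E}
    (hC : IsNodeMinCut tl hd s t C) {e : E} (he : e ∈ C) :
    ∃ p : List E, NPathFromTo tl hd s t p ∧ e ∈ p ∧ ∀ b ∈ p, b ∈ C → b = e := by
  by_contra hcon
  push_neg at hcon
  have hsep : NSeparates tl hd s t (C.erase e) := by
    intro p hp
    by_contra hno
    push_neg at hno
    have hall : ∀ b ∈ p, b ∈ C → b = e := by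
      intro b hbp hbC
      by_contra hbe
      exact hno b (Finset.mem_erase.2 ⟨hbe, hbC⟩) hbp
    obtain ⟨c, hcC, hcp⟩ := hC.1 p hp
    have : c = e := hall c hcp hcC
    subst this
    obtain ⟨b, hb1, hb2, hb3⟩ := hcon p hp hcp
    exact hb3 (hall b hb1 hb2)
  have hle : nmincut tl hd s t ≤ (C.erase e).card :=
    Nat.sInf_le ⟨C.erase e, hsep, rfl⟩
  have hcard : (C.erase e).card = C.card - 1 := Finset.card_erase_of_mem he
  have hpos : 0 < C.card := Finset.card_pos.2 ⟨e, he⟩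
  have := hC.2
  omega

end Aux

/-- the relation `CUT₁ ≤ CUT₂` (i.e. `CUT₁` separates `CUT₂` from `s`)
on minimum cuts between `s` and `t` is reflexive, antisymmetric and transitive. -/

theorem cut_le_partialOrder {V E : Type*} [Fintype E] (tl hd : E → V) (s t : V)
    (hacy : Acyclic tl hd) (hsrc : ∀ e : E, hd e ≠ s) (hts : t ≠ s) :
    (∀ C : Finset E, IsNodeMinCut tl hd s t C → Separates tl hd s C C) ∧
    (∀ C₁ C₂ : Finset E, IsNodeMinCut tl hd s t C₁ → IsNodeMinCut tl hd s t C₂ →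
      Separates tl hd s C₂ C₁ → Separates tl hd s C₁ C₂ → C₁ = C₂) ∧
    (∀ C₁ C₂ C₃ : Finset E, IsNodeMinCut tl hd s t C₁ → IsNodeMinCut tl hd s t C₂ →
      IsNodeMinCut tl hd s t C₃ →
      Separates tl hd s C₂ C₁ → Separates tl hd s C₃ C₂ → Separates tl hd s C₃ C₁) := by
  letI := Classical.decEq E
  refine ⟨?_, ?_, ?_⟩
  · -- reflexivity
    intro C _ p _ ⟨e, he1, he2⟩
    exact ⟨e, he2, List.mem_of_mem_getLast? he1⟩
  · -- antisymmetry
    intro C₁ C₂ hC₁ hC₂ h21 h12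
    -- h21 : C₁ separates C₂ from s ; h12 : C₂ separates C₁ from s
    have key : ∀ (D₁ D₂ : Finset E), IsNodeMinCut tl hd s t D₁ →
        Separates tl hd s D₂ D₁ → Separates tl hd s D₁ D₂ → D₁ ⊆ D₂ := by
      intro D₁ D₂ hD₁ hsep21 hsep12 e he
      obtain ⟨p, hp, hep, huniq⟩ := mincut_edge_path hD₁ he
      obtain ⟨hqpath, hqlast⟩ := path_take hp.1 hep
      obtain ⟨g, hgD₂, hgq⟩ := hsep12 _ hqpath ⟨e, hqlast, he⟩
      have hgp : g ∈ p := List.mem_of_mem_take hgq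
      have hge : p.idxOf g ≤ p.idxOf e := by
        have := myIndexOf_lt_of_mem_take hgq; omega
      obtain ⟨hrpath, hrlast⟩ := path_take hp.1 hgp
      obtain ⟨b, hbD₁, hbr⟩ := hsep21 _ hrpath ⟨g, hrlast, hgD₂⟩
      have hbp : b ∈ p := List.mem_of_mem_take hbr
      have hbe : b = e := huniq b hbp hbD₁
      subst hbe
      have heg : p.idxOf b ≤ p.idxOf g := by
        have := myIndexOf_lt_of_mem_take hbr; omega
      have hidx : p.idxOf b = p.idxOf g := le_antisymm heg hge
      have h1 : p.get ⟨p.idxOf b, List.idxOf_lt_length_iff.2 hbp⟩ = b := List.idxOf_get _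
      have h2 : p.get ⟨p.idxOf g, List.idxOf_lt_length_iff.2 hgp⟩ = g := List.idxOf_get _
      have hbg : b = g := by
        rw [← h1, ← h2]; exact congrArg p.get (Fin.ext hidx)
      exact hbg ▸ hgD₂
    exact Finset.Subset.antisymm (key C₁ C₂ hC₁ h21 h12) (key C₂ C₁ hC₂ h12 h21)
  · -- transitivity
    intro C₁ C₂ C₃ _ _ _ h21 h32 p hp hlast
    obtain ⟨b, hbC₂, hbp⟩ := h32 p hp hlast
    obtain ⟨hqpath, hqlast⟩ := path_take hp hbp
    obtain ⟨c, hcC₁, hcq⟩ := h21 _ hqpath ⟨b, hqlast, hbC₂⟩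
    exact ⟨c, hcC₁, List.mem_of_mem_take hcq⟩
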